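/- Let n ≥ 2, 0 < ε ≤ 1/4 and α > 0. Define A = {y' ∈ ℝ^{n-1} : 1 < |y'| < 2 and -2 < y_i < -1 for all 1 ≤ i ≤ n-1}, g²(s) = (s - 1/16)^{-1/4}(-ln(s - 1/16))^{-1/4-ε} for 1/16 < s < 1/4 and g²(s) = 0 otherwise, and g_n(y', s) = α χ_A(y') g²(s). Then for every r with 1 ≤ r < ∞, the map s ↦ g_n(·, s) belongs to L⁴(ℝ; L^r(ℝ^{n-1})). -/

import Mathlib

open MeasureTheory Real Set

open scoped Topology ENNReal
open Filter

lemma key_integrable (ε : ℝ) (hε : 0 < ε) :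
    IntegrableOn (fun s : ℝ => (s - 1/16)⁻¹ * (-Real.log (s - 1/16)) ^ (-1 - 4*ε))
      (Ioo (1/16 : ℝ) (1/4)) volume := by
  set G : ℝ → ℝ := fun s => (4*ε)⁻¹ * (-Real.log (s - 1/16)) ^ (-(4*ε)) with hG
  have h4ε : (4:ℝ)*ε ≠ 0 := by positivity
  have hderiv : ∀ x ∈ Ioo (1/16 : ℝ) (1/4),
      HasDerivAt G ((x - 1/16)⁻¹ * (-Real.log (x - 1/16)) ^ (-1 - 4*ε)) x := by
    intro x hx
    have ht : 0 < x - 1/16 := by linarith [hx.1]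
    have ht1 : x - 1/16 < 1 := by linarith [hx.2]
    have hu : 0 < -Real.log (x - 1/16) := by
      have := Real.log_neg ht ht1
      linarith
    have h1 : HasDerivAt (fun y : ℝ => -Real.log (y - 1/16)) (-(x - 1/16)⁻¹) x := by
      have := ((Real.hasDerivAt_log ht.ne').comp x ((hasDerivAt_id x).sub_const (1/16)))
      exact this.neg.congr_deriv (by simp)
    have h2 := (h1.rpow_const (p := -(4*ε)) (Or.inl hu.ne'))
    have h3 := h2.const_mul ((4*ε)⁻¹)
    refine HasDerivAt.congr_deriv h3 ?_
    rw [show (-1 - 4*ε : ℝ) = -(4*ε) - 1 by ring,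
      show (4*ε)⁻¹ * (-(x - 1/16)⁻¹ * -(4*ε) * (-Real.log (x-1/16)) ^ (-(4*ε)-1)) =
        ((4*ε)⁻¹ * (4*ε)) * ((x-1/16)⁻¹ * (-Real.log (x-1/16)) ^ (-(4*ε)-1)) by ring,
      inv_mul_cancel₀ h4ε, one_mul]
  have hnonneg : ∀ x ∈ Ioo (1/16 : ℝ) (1/4),
      0 ≤ (x - 1/16)⁻¹ * (-Real.log (x - 1/16)) ^ (-1 - 4*ε) := by
    intro x hx
    have ht : 0 < x - 1/16 := by linarith [hx.1]
    exact mul_nonneg (inv_nonneg.2 ht.le) (Real.rpow_nonneg (by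
      have := Real.log_neg ht (by linarith [hx.2]); linarith) _)
  have hcont : ContinuousOn G (Icc (1/16 : ℝ) (1/4)) := by
    intro x hx
    rcases eq_or_lt_of_le hx.1 with heq | hlt
    · subst heq
      rw [← continuousWithinAt_diff_self, Icc_diff_left]
      have hG0 : G (1/16) = 0 := by
        have hlog0 : -Real.log ((1:ℝ)/16 - 1/16) = 0 := by norm_num
        simp [hG, hlog0, Real.zero_rpow (neg_ne_zero.mpr h4ε)]
      unfold ContinuousWithinAt
      rw [hG0]
      have hsub : Tendsto (fun y : ℝ => y - 1/16) (𝓝[Ioc (1/16:ℝ) (1/4)] (1/16)) (𝓝[>] 0) := by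
        rw [tendsto_nhdsWithin_iff]
        constructor
        · have h0 : Tendsto (fun y : ℝ => y - 1/16) (𝓝 (1/16:ℝ)) (𝓝 0) := by
            have := Continuous.tendsto (show Continuous fun y : ℝ => y - 1/16 by fun_prop) (1/16:ℝ)
            simpa using this
          exact h0.mono_left nhdsWithin_le_nhds
        · exact eventually_mem_nhdsWithin.mono fun y hy => sub_pos.2 hy.1
      have hlog : Tendsto (fun y : ℝ => -Real.log (y - 1/16))
          (𝓝[Ioc (1/16:ℝ) (1/4)] (1/16)) atTop :=
        tendsto_neg_atBot_atTop.comp (Real.tendsto_log_nhdsGT_zero.comp hsub)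
      have hpow := (tendsto_rpow_neg_atTop (by positivity : (0:ℝ) < 4*ε)).comp hlog
      have := hpow.const_mul ((4*ε)⁻¹)
      simpa [hG, Function.comp] using this
    · exact (ContinuousAt.continuousWithinAt (by
        have ht : 0 < x - 1/16 := by linarith
        have ht1 : x - 1/16 < 1 := by
          rcases hx with ⟨_, h2⟩; linarith
        have hu : 0 < -Real.log (x - 1/16) := by
          have := Real.log_neg ht ht1; linarith
        have hcsub : ContinuousAt (fun y : ℝ => y - 1/16) x := by fun_prop
        have hcl : ContinuousAt (fun y : ℝ => -Real.log (y - 1/16)) x := by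
          have := (ContinuousAt.comp (g := Real.log) (f := fun y : ℝ => y - 1/16) (x := x)
            (Real.continuousAt_log (show x - 1/16 ≠ 0 from ht.ne')) hcsub).neg
          exact this
        exact (hcl.rpow_const (Or.inl hu.ne')).const_mul _))
  exact (intervalIntegral.integrableOn_deriv_of_nonneg hcont hderiv hnonneg).mono_set Ioo_subset_Ioc_self

/-- The boundary data `g_n(y',s) = α χ_A(y') g²(s)` belongs to `L⁴(ℝ; L^r(ℝ^{n-1}))`
for every `1 ≤ r < ∞`: each time slice lies in `L^r(ℝ^{n-1})` and the map
`s ↦ ‖g_n(·,s)‖_{L^r}` belongs to `L⁴(ℝ)`. -/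
theorem stmt_2 (n : ℕ) (hn : 2 ≤ n) (ε α : ℝ) (hε : 0 < ε) (hε' : ε ≤ 1/4) (hα : 0 < α)
    (A : Set (EuclideanSpace ℝ (Fin (n-1))))
    (hA : A = {y' : EuclideanSpace ℝ (Fin (n-1)) |
      1 < ‖y'‖ ∧ ‖y'‖ < 2 ∧ ∀ i : Fin (n-1), -2 < y' i ∧ y' i < -1})
    (g2 : ℝ → ℝ)
    (hg2 : ∀ s : ℝ, g2 s =
      if 1/16 < s ∧ s < 1/4 then
        (s - 1/16) ^ (-(1/4) : ℝ) * (-Real.log (s - 1/16)) ^ (-(1/4) - ε)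
      else 0)
    (gn : EuclideanSpace ℝ (Fin (n-1)) → ℝ → ℝ)
    (hgn : ∀ y' s, gn y' s = α * A.indicator (fun _ => (1:ℝ)) y' * g2 s)
    (r : ℝ) (hr : 1 ≤ r) :
    (∀ s : ℝ, MemLp (fun y' => gn y' s) (ENNReal.ofReal r) volume) ∧
    MemLp (fun s : ℝ =>
      (eLpNorm (fun y' => gn y' s) (ENNReal.ofReal r) volume).toReal) 4 volume := by
  -- A is open hence measurable
  have hAm : MeasurableSet A := by
    rw [hA]
    have hset : {y' : EuclideanSpace ℝ (Fin (n-1)) |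
        1 < ‖y'‖ ∧ ‖y'‖ < 2 ∧ ∀ i : Fin (n-1), -2 < y' i ∧ y' i < -1}
        = {y' : EuclideanSpace ℝ (Fin (n-1)) | 1 < ‖y'‖} ∩
          ({y' : EuclideanSpace ℝ (Fin (n-1)) | ‖y'‖ < 2} ∩
            ⋂ i : Fin (n-1), ({y' : EuclideanSpace ℝ (Fin (n-1)) | -2 < y' i} ∩
              {y' : EuclideanSpace ℝ (Fin (n-1)) | y' i < -1})) := by
      ext y'
      simp only [mem_setOf_eq, mem_inter_iff, mem_iInter, forall_and]
    rw [hset]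
    refine ((isOpen_lt continuous_const continuous_norm).inter
      ((isOpen_lt continuous_norm continuous_const).inter
        (isOpen_iInter_of_finite fun i => ?_))).measurableSet
    have hc : Continuous fun y' : EuclideanSpace ℝ (Fin (n-1)) => y' i :=
      (EuclideanSpace.proj i).continuous
    exact (isOpen_lt continuous_const hc).inter (isOpen_lt hc continuous_const)
  -- A has finite measure
  have hAfin : volume A < ∞ := by
    refine lt_of_le_of_lt (measure_mono ?_) (measure_ball_lt_top (x := (0 : EuclideanSpace ℝ (Fin (n-1)))) (r := 2))
    rw [hA]
    intro y' hy'
    exact mem_ball_zero_iff.2 hy'.2.1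
  -- rewrite each slice as an indicator
  have hslice : ∀ s : ℝ, (fun y' => gn y' s) = A.indicator (fun _ => α * g2 s) := by
    intro s
    funext y'
    rw [hgn]
    by_cases hy : y' ∈ A
    · simp [Set.indicator_of_mem hy]
    · simp [Set.indicator_of_notMem hy]
  have hp0 : (ENNReal.ofReal r) ≠ 0 :=
    ne_of_gt (ENNReal.ofReal_pos.mpr (lt_of_lt_of_le one_pos hr))
  have hptop : (ENNReal.ofReal r) ≠ ∞ := ENNReal.ofReal_ne_top
  -- g2 is a.e. strongly measurable
  have hg2ind : g2 = (Ioo (1/16 : ℝ) (1/4)).indicator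
      (fun s => (s - 1/16) ^ (-(1/4) : ℝ) * (-Real.log (s - 1/16)) ^ (-(1/4) - ε)) := by
    funext s
    rw [hg2 s]
    by_cases hs : s ∈ Ioo (1/16 : ℝ) (1/4)
    · rw [Set.indicator_of_mem hs, if_pos ⟨hs.1, hs.2⟩]
    · rw [Set.indicator_of_notMem hs, if_neg (fun h => hs ⟨h.1, h.2⟩)]
  have hg2meas : AEStronglyMeasurable g2 volume := by
    rw [hg2ind, aestronglyMeasurable_indicator_iff measurableSet_Ioo]
    refine ContinuousOn.aestronglyMeasurable (fun x hx => ?_) measurableSet_Ioo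
    have ht : (0:ℝ) < x - 1/16 := by have := hx.1; linarith
    have ht1 : x - 1/16 < 1 := by have := hx.2; linarith
    have hu : (0:ℝ) < -Real.log (x - 1/16) := by
      have := Real.log_neg ht ht1; linarith
    have hcsub : ContinuousAt (fun y : ℝ => y - 1/16) x := by fun_prop
    have hcl : ContinuousAt (fun y : ℝ => -Real.log (y - 1/16)) x := by
      have := (ContinuousAt.comp (g := Real.log) (f := fun y : ℝ => y - 1/16) (x := x)
        (Real.continuousAt_log (show x - 1/16 ≠ 0 from ht.ne')) hcsub).neg
      exact this
    exact (((hcsub.rpow_const (Or.inl ht.ne')).mul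
      (hcl.rpow_const (Or.inl hu.ne')))).continuousWithinAt
  -- g2 is in L⁴
  have hg2mem : MemLp g2 4 volume := by
    have hiff := memLp_norm_rpow_iff (p := 4) (q := 4) (f := g2)
      hg2meas (by norm_num) (by norm_num)
    rw [ENNReal.div_self (by norm_num) (by norm_num), memLp_one_iff_integrable] at hiff
    refine hiff.mp ?_
    have h4 : ((4 : ℝ≥0∞)).toReal = (4 : ℝ) := by norm_num
    have heqind : (fun x : ℝ => ‖g2 x‖ ^ ((4:ℝ≥0∞)).toReal)
        = (Ioo (1/16:ℝ) (1/4)).indicator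
          (fun s => (s - 1/16)⁻¹ * (-Real.log (s - 1/16)) ^ (-1 - 4*ε)) := by
      funext s
      rw [h4]
      by_cases hs : s ∈ Ioo (1/16:ℝ) (1/4)
      · rw [Set.indicator_of_mem hs, hg2 s, if_pos ⟨hs.1, hs.2⟩]
        have ht : (0:ℝ) < s - 1/16 := by have := hs.1; linarith
        have ht1 : s - 1/16 < 1 := by have := hs.2; linarith
        have hu : (0:ℝ) < -Real.log (s - 1/16) := by
          have := Real.log_neg ht ht1; linarith
        have hnn : 0 ≤ (s - 1/16) ^ (-(1/4) : ℝ) * (-Real.log (s - 1/16)) ^ (-(1/4) - ε) :=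
          mul_nonneg (Real.rpow_nonneg ht.le _) (Real.rpow_nonneg hu.le _)
        rw [Real.norm_eq_abs, abs_of_nonneg hnn, Real.mul_rpow (Real.rpow_nonneg ht.le _)
          (Real.rpow_nonneg hu.le _), ← Real.rpow_mul ht.le, ← Real.rpow_mul hu.le]
        norm_num
        rw [show ((-(1/4) - ε) * 4 : ℝ) = -1 - 4*ε by ring, Real.rpow_neg_one]
      · rw [Set.indicator_of_notMem hs, hg2 s, if_neg (by
          intro h; exact hs ⟨h.1, h.2⟩)]
        simp
    rw [heqind, integrable_indicator_iff measurableSet_Ioo]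
    exact key_integrable ε hε
  constructor
  · intro s
    rw [hslice s]
    exact memLp_indicator_const _ hAm _ (Or.inr hAfin.ne)
  · set C : ℝ := (volume A ^ (1/(ENNReal.ofReal r).toReal)).toReal with hC
    have hFeq : (fun s : ℝ =>
        (eLpNorm (fun y' => gn y' s) (ENNReal.ofReal r) volume).toReal)
        = fun s : ℝ => C * ‖α * g2 s‖ := by
      funext s
      rw [hslice s, eLpNorm_indicator_const hAm hp0 hptop, ENNReal.toReal_mul]
      simp [hC, mul_comm]
    rw [hFeq]
    exact ((hg2mem.const_mul α).norm).const_mul C
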